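/- If M₀M₁ ≠ M₁M₀ and (M₀ − r₀)(M₁ − r₁⁻¹) = 0, then for every f₀ ∈ ℂ with f₀ ≠ 0 there exists K ∈ SL(2,ℂ) such that K·M₀·K⁻¹ = [[r₀, f₀], [0, r₀⁻¹]] and K·M₁·K⁻¹ = diag(r₁, r₁⁻¹). -/

import Mathlib

open Matrix Complex

theorem stmt4 (M₀ M₁ : Matrix (Fin 2) (Fin 2) ℂ)
    (hM₀ : M₀.det = 1) (hM₁ : M₁.det = 1)
    (r₀ r₁ : ℂ)
    (hr₀0 : r₀ ≠ 0) (hr₀1 : r₀ ≠ 1) (hr₀m : r₀ ≠ -1)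
    (hr₁0 : r₁ ≠ 0) (hr₁1 : r₁ ≠ 1) (hr₁m : r₁ ≠ -1)
    (htr₀ : M₀.trace = r₀ + r₀⁻¹) (htr₁ : M₁.trace = r₁ + r₁⁻¹)
    (hcomm : M₀ * M₁ ≠ M₁ * M₀)
    (h : (M₀ - r₀ • (1 : Matrix (Fin 2) (Fin 2) ℂ)) * (M₁ - r₁⁻¹ • 1) = 0) :
    ∀ f₀ : ℂ, f₀ ≠ 0 → ∃ K : Matrix (Fin 2) (Fin 2) ℂ, K.det = 1 ∧
      K * M₀ * K⁻¹ = !![r₀, f₀; 0, r₀⁻¹] ∧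
      K * M₁ * K⁻¹ = !![r₁, 0; 0, r₁⁻¹] := by
  intro f₀ hf₀
  have hr₁inv : r₁ * r₁⁻¹ = 1 := mul_inv_cancel₀ hr₁0
  have hr₀inv : r₀ * r₀⁻¹ = 1 := mul_inv_cancel₀ hr₀0
  have hr₁sq : r₁ - r₁⁻¹ ≠ 0 := by
    intro hh
    have h2 : (r₁ - 1) * (r₁ + 1) = 0 := by
      have h3 : r₁ = r₁⁻¹ := sub_eq_zero.mp hh
      linear_combination r₁ * h3 + hr₁inv
    rcases mul_eq_zero.mp h2 with h'|h'
    · exact hr₁1 (sub_eq_zero.mp h')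
    · exact hr₁m (eq_neg_of_add_eq_zero_left h')
  have hdet₁ : M₁ 0 0 * M₁ 1 1 - M₁ 0 1 * M₁ 1 0 = 1 := by
    rw [← Matrix.det_fin_two]; exact hM₁
  have htr₁' : M₁ 0 0 + M₁ 1 1 = r₁ + r₁⁻¹ := by
    rw [← Matrix.trace_fin_two]; exact htr₁
  have hdet₀ : M₀ 0 0 * M₀ 1 1 - M₀ 0 1 * M₀ 1 0 = 1 := by
    rw [← Matrix.det_fin_two]; exact hM₀
  have htr₀' : M₀ 0 0 + M₀ 1 1 = r₀ + r₀⁻¹ := by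
    rw [← Matrix.trace_fin_two]; exact htr₀
  -- entries of h
  have h00 := congrFun (congrFun h 0) 0
  have h01 := congrFun (congrFun h 0) 1
  have h10 := congrFun (congrFun h 1) 0
  have h11 := congrFun (congrFun h 1) 1
  simp [Matrix.mul_apply, Fin.sum_univ_two, Matrix.sub_apply, Matrix.one_apply] at h00 h01 h10 h11
  -- a joint eigenvector w for M₁ (eigenvalue r₁) and M₀ (eigenvalue r₀)
  have hw : ∃ w0 w1 : ℂ, (w0 ≠ 0 ∨ w1 ≠ 0) ∧
      M₁ 0 0 * w0 + M₁ 0 1 * w1 = r₁ * w0 ∧ M₁ 1 0 * w0 + M₁ 1 1 * w1 = r₁ * w1 ∧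
      M₀ 0 0 * w0 + M₀ 0 1 * w1 = r₀ * w0 ∧ M₀ 1 0 * w0 + M₀ 1 1 * w1 = r₀ * w1 := by
    by_cases hc0 : M₁ 0 0 - r₁⁻¹ = 0 ∧ M₁ 1 0 = 0
    · refine ⟨M₁ 0 1, M₁ 1 1 - r₁⁻¹, ?_, ?_, ?_, ?_, ?_⟩
      · by_contra hng
        push_neg at hng
        exact hr₁sq (by linear_combination hc0.1 + hng.2 - htr₁')
      · linear_combination M₁ 0 1 * htr₁'
      · linear_combination M₁ 1 1 * htr₁' - hdet₁ + hr₁inv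
      · linear_combination h01
      · linear_combination h11
    · refine ⟨M₁ 0 0 - r₁⁻¹, M₁ 1 0, ?_, ?_, ?_, ?_, ?_⟩
      · rcases not_and_or.mp hc0 with h'|h'
        · exact Or.inl h'
        · exact Or.inr h'
      · linear_combination M₁ 0 0 * htr₁' - hdet₁ + hr₁inv
      · linear_combination M₁ 1 0 * htr₁'
      · linear_combination h00
      · linear_combination h10
  -- an eigenvector v for M₁ with eigenvalue r₁⁻¹
  have hv : ∃ v0 v1 : ℂ, (v0 ≠ 0 ∨ v1 ≠ 0) ∧
      M₁ 0 0 * v0 + M₁ 0 1 * v1 = r₁⁻¹ * v0 ∧ M₁ 1 0 * v0 + M₁ 1 1 * v1 = r₁⁻¹ * v1 := by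
    by_cases hc0 : M₁ 0 0 - r₁ = 0 ∧ M₁ 1 0 = 0
    · refine ⟨M₁ 0 1, M₁ 1 1 - r₁, ?_, ?_, ?_⟩
      · by_contra hng
        push_neg at hng
        exact hr₁sq (by linear_combination htr₁' - hc0.1 - hng.2)
      · linear_combination M₁ 0 1 * htr₁'
      · linear_combination M₁ 1 1 * htr₁' - hdet₁ + hr₁inv
    · refine ⟨M₁ 0 0 - r₁, M₁ 1 0, ?_, ?_, ?_⟩
      · rcases not_and_or.mp hc0 with h'|h'
        · exact Or.inl h'
        · exact Or.inr h'
      · linear_combination M₁ 0 0 * htr₁' - hdet₁ + hr₁inv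
      · linear_combination M₁ 1 0 * htr₁'
  obtain ⟨w0, w1, hwnz, Ew1, Ew2, Fw1, Fw2⟩ := hw
  obtain ⟨v0, v1, hvnz, Ev1, Ev2⟩ := hv
  -- w and v are linearly independent
  have hδ : w0 * v1 - w1 * v0 ≠ 0 := by
    intro hδ0
    have h1 : (r₁ - r₁⁻¹) * (w0 * v1) = 0 := by
      linear_combination w1 * Ev1 - v1 * Ew1 + (M₁ 0 0 - r₁⁻¹) * hδ0
    have hwv01 : w0 * v1 = 0 := (mul_eq_zero.mp h1).resolve_left hr₁sq
    have hwv10 : w1 * v0 = 0 := by linear_combination hwv01 - hδ0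
    have h2 : (r₁ - r₁⁻¹) * (w0 * v0) = 0 := by
      linear_combination w0 * Ev1 - v0 * Ew1 + M₁ 0 1 * hwv10 - M₁ 0 1 * hwv01
    have hwv00 : w0 * v0 = 0 := (mul_eq_zero.mp h2).resolve_left hr₁sq
    have h3 : (r₁ - r₁⁻¹) * (w1 * v1) = 0 := by
      linear_combination w1 * Ev2 - v1 * Ew2 + M₁ 1 0 * hwv01 - M₁ 1 0 * hwv10
    have hwv11 : w1 * v1 = 0 := (mul_eq_zero.mp h3).resolve_left hr₁sq
    rcases hwnz with hw'|hw' <;> rcases hvnz with hv'|hv'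
    · exact hv' ((mul_eq_zero.mp hwv00).resolve_left hw')
    · exact hv' ((mul_eq_zero.mp hwv01).resolve_left hw')
    · exact hv' ((mul_eq_zero.mp hwv10).resolve_left hw')
    · exact hv' ((mul_eq_zero.mp hwv11).resolve_left hw')
  -- decompose M₀ v in the basis (w, v)
  obtain ⟨α, β, hA, hB⟩ : ∃ α β : ℂ,
      M₀ 0 0 * v0 + M₀ 0 1 * v1 = α * w0 + β * v0 ∧
      M₀ 1 0 * v0 + M₀ 1 1 * v1 = α * w1 + β * v1 := by
    refine ⟨((M₀ 0 0 * v0 + M₀ 0 1 * v1) * v1 - (M₀ 1 0 * v0 + M₀ 1 1 * v1) * v0) /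
              (w0 * v1 - w1 * v0),
            (w0 * (M₀ 1 0 * v0 + M₀ 1 1 * v1) - w1 * (M₀ 0 0 * v0 + M₀ 0 1 * v1)) /
              (w0 * v1 - w1 * v0), ?_, ?_⟩ <;>
      rw [div_mul_eq_mul_div, div_mul_eq_mul_div, ← add_div, eq_div_iff hδ] <;> ring
  have hβ : β = r₀⁻¹ := by
    have key : (r₀ + β) * (w0 * v1 - w1 * v0) = (r₀ + r₀⁻¹) * (w0 * v1 - w1 * v0) := by
      linear_combination (w0 * v1 - w1 * v0) * htr₀' - v1 * Fw1 + w1 * hA - w0 * hB + v0 * Fw2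
    have := mul_right_cancel₀ hδ key
    linear_combination this
  -- α ≠ 0, otherwise M₀ and M₁ commute
  have hα : α ≠ 0 := by
    intro hα0
    apply hcomm
    have g1w : (M₀ 0 0 * M₁ 0 0 + M₀ 0 1 * M₁ 1 0 - (M₁ 0 0 * M₀ 0 0 + M₁ 0 1 * M₀ 1 0)) * w0
        + (M₀ 0 0 * M₁ 0 1 + M₀ 0 1 * M₁ 1 1 - (M₁ 0 0 * M₀ 0 1 + M₁ 0 1 * M₀ 1 1)) * w1 = 0 := by
      linear_combination M₀ 0 0 * Ew1 + M₀ 0 1 * Ew2 + r₁ * Fw1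
        - M₁ 0 0 * Fw1 - M₁ 0 1 * Fw2 - r₀ * Ew1
    have g1v : (M₀ 0 0 * M₁ 0 0 + M₀ 0 1 * M₁ 1 0 - (M₁ 0 0 * M₀ 0 0 + M₁ 0 1 * M₀ 1 0)) * v0
        + (M₀ 0 0 * M₁ 0 1 + M₀ 0 1 * M₁ 1 1 - (M₁ 0 0 * M₀ 0 1 + M₁ 0 1 * M₀ 1 1)) * v1 = 0 := by
      linear_combination M₀ 0 0 * Ev1 + M₀ 0 1 * Ev2 + r₁⁻¹ * hA
        - M₁ 0 0 * hA - M₁ 0 1 * hB - β * Ev1 + (r₁⁻¹ * w0 - M₁ 0 0 * w0 - M₁ 0 1 * w1) * hα0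
    have g2w : (M₀ 1 0 * M₁ 0 0 + M₀ 1 1 * M₁ 1 0 - (M₁ 1 0 * M₀ 0 0 + M₁ 1 1 * M₀ 1 0)) * w0
        + (M₀ 1 0 * M₁ 0 1 + M₀ 1 1 * M₁ 1 1 - (M₁ 1 0 * M₀ 0 1 + M₁ 1 1 * M₀ 1 1)) * w1 = 0 := by
      linear_combination M₀ 1 0 * Ew1 + M₀ 1 1 * Ew2 + r₁ * Fw2
        - M₁ 1 0 * Fw1 - M₁ 1 1 * Fw2 - r₀ * Ew2
    have g2v : (M₀ 1 0 * M₁ 0 0 + M₀ 1 1 * M₁ 1 0 - (M₁ 1 0 * M₀ 0 0 + M₁ 1 1 * M₀ 1 0)) * v0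
        + (M₀ 1 0 * M₁ 0 1 + M₀ 1 1 * M₁ 1 1 - (M₁ 1 0 * M₀ 0 1 + M₁ 1 1 * M₀ 1 1)) * v1 = 0 := by
      linear_combination M₀ 1 0 * Ev1 + M₀ 1 1 * Ev2 + r₁⁻¹ * hB
        - M₁ 1 0 * hA - M₁ 1 1 * hB - β * Ev2 + (r₁⁻¹ * w1 - M₁ 1 0 * w0 - M₁ 1 1 * w1) * hα0
    have D00 : M₀ 0 0 * M₁ 0 0 + M₀ 0 1 * M₁ 1 0 = M₁ 0 0 * M₀ 0 0 + M₁ 0 1 * M₀ 1 0 := by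
      have hD : (M₀ 0 0 * M₁ 0 0 + M₀ 0 1 * M₁ 1 0 - (M₁ 0 0 * M₀ 0 0 + M₁ 0 1 * M₀ 1 0))
          * (w0 * v1 - w1 * v0) = 0 := by linear_combination v1 * g1w - w1 * g1v
      linear_combination (mul_eq_zero.mp hD).resolve_right hδ
    have D01 : M₀ 0 0 * M₁ 0 1 + M₀ 0 1 * M₁ 1 1 = M₁ 0 0 * M₀ 0 1 + M₁ 0 1 * M₀ 1 1 := by
      have hD : (M₀ 0 0 * M₁ 0 1 + M₀ 0 1 * M₁ 1 1 - (M₁ 0 0 * M₀ 0 1 + M₁ 0 1 * M₀ 1 1))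
          * (w0 * v1 - w1 * v0) = 0 := by linear_combination w0 * g1v - v0 * g1w
      linear_combination (mul_eq_zero.mp hD).resolve_right hδ
    have D10 : M₀ 1 0 * M₁ 0 0 + M₀ 1 1 * M₁ 1 0 = M₁ 1 0 * M₀ 0 0 + M₁ 1 1 * M₀ 1 0 := by
      have hD : (M₀ 1 0 * M₁ 0 0 + M₀ 1 1 * M₁ 1 0 - (M₁ 1 0 * M₀ 0 0 + M₁ 1 1 * M₀ 1 0))
          * (w0 * v1 - w1 * v0) = 0 := by linear_combination v1 * g2w - w1 * g2v
      linear_combination (mul_eq_zero.mp hD).resolve_right hδ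
    have D11 : M₀ 1 0 * M₁ 0 1 + M₀ 1 1 * M₁ 1 1 = M₁ 1 0 * M₀ 0 1 + M₁ 1 1 * M₀ 1 1 := by
      have hD : (M₀ 1 0 * M₁ 0 1 + M₀ 1 1 * M₁ 1 1 - (M₁ 1 0 * M₀ 0 1 + M₁ 1 1 * M₀ 1 1))
          * (w0 * v1 - w1 * v0) = 0 := by linear_combination w0 * g2v - v0 * g2w
      linear_combination (mul_eq_zero.mp hD).resolve_right hδ
    ext i j
    fin_cases i <;> fin_cases j <;> simp [Matrix.mul_apply, Fin.sum_univ_two]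
    · linear_combination D00
    · linear_combination D01
    · linear_combination D10
    · linear_combination D11
  -- scaling
  have hαδ : α * (w0 * v1 - w1 * v0) ≠ 0 := mul_ne_zero hα hδ
  obtain ⟨μ, hμ⟩ := IsAlgClosed.exists_pow_nat_eq (f₀ / (α * (w0 * v1 - w1 * v0))) (n := 2)
    (by norm_num)
  have hμ0 : μ ≠ 0 := by
    intro h0
    rw [h0] at hμ
    simp at hμ
    exact (div_ne_zero hf₀ hαδ) hμ.symm
  have hδμ : (w0 * v1 - w1 * v0) * μ ≠ 0 := mul_ne_zero hδ hμ0
  have hμ' : μ ^ 2 * (α * (w0 * v1 - w1 * v0)) = f₀ := by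
    rw [hμ]; field_simp
  have hscale : μ * α = f₀ * ((w0 * v1 - w1 * v0) * μ)⁻¹ := by
    rw [eq_mul_inv_iff_mul_eq₀ hδμ]
    linear_combination hμ'
  set l : ℂ := ((w0 * v1 - w1 * v0) * μ)⁻¹ with hl
  set P : Matrix (Fin 2) (Fin 2) ℂ := !![l * w0, μ * v0; l * w1, μ * v1] with hPdef
  have hdetP : P.det = 1 := by
    rw [hPdef, Matrix.det_fin_two_of, hl]
    field_simp
  have hunit : IsUnit P.det := by rw [hdetP]; exact isUnit_one
  have hP0 : M₀ * P = P * !![r₀, f₀; 0, r₀⁻¹] := by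
    ext i j
    fin_cases i <;> fin_cases j <;> simp [hPdef, Matrix.mul_apply, Fin.sum_univ_two]
    · linear_combination l * Fw1
    · linear_combination μ * hA + w0 * hscale + μ * v0 * hβ
    · linear_combination l * Fw2
    · linear_combination μ * hB + w1 * hscale + μ * v1 * hβ
  have hP1 : M₁ * P = P * !![r₁, 0; 0, r₁⁻¹] := by
    ext i j
    fin_cases i <;> fin_cases j <;> simp [hPdef, Matrix.mul_apply, Fin.sum_univ_two]
    · linear_combination l * Ew1
    · linear_combination μ * Ev1
    · linear_combination l * Ew2
    · linear_combination μ * Ev2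
  refine ⟨P⁻¹, ?_, ?_, ?_⟩
  · rw [Matrix.det_nonsing_inv, hdetP, Ring.inverse_one]
  · rw [Matrix.nonsing_inv_nonsing_inv P hunit, mul_assoc, hP0, ← mul_assoc,
      Matrix.nonsing_inv_mul P hunit, one_mul]
  · rw [Matrix.nonsing_inv_nonsing_inv P hunit, mul_assoc, hP1, ← mul_assoc,
      Matrix.nonsing_inv_mul P hunit, one_mul]
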